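/- Let ε > 0 and a₀ ∈ ℝ, define u(t) = 4ε·e^{3ε²t} + a₀²·(e^{3ε²t} − 1), a(t) = 2·√ε·a₀/√(u(t)), and φ(t) = −(3/16)·ε²·ln(u(t)) + (9/16)·ε⁴·t − (3/16)·ε²·a₀²/u(t). Then for all t ≥ 0, φ'(t) = (9/256)·ε²·a(t)⁴. -/

import Mathlib

/-- The multiple-scales phase
`φ(t) = −(3/16)ε²·ln u(t) + (9/16)ε⁴t − (3/16)ε²a₀²/u(t)`,
with `u(t) = 4ε·e^{3ε²t} + a₀²(e^{3ε²t} − 1)` and amplitude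
`a(t) = 2√ε·a₀/√(u(t))`, satisfies `φ' = (9/256)ε²a⁴`. -/
theorem stmt13 (ε a₀ : ℝ) (hε : 0 < ε) :
    let u : ℝ → ℝ := fun t => 4*ε*Real.exp (3*ε^2*t) + a₀^2*(Real.exp (3*ε^2*t) - 1)
    let a : ℝ → ℝ := fun t => 2 * Real.sqrt ε * a₀ / Real.sqrt (u t)
    let φ : ℝ → ℝ := fun t =>
      -(3/16)*ε^2*Real.log (u t) + (9/16)*ε^4*t - (3/16)*ε^2*a₀^2 / u t
    ∀ t : ℝ, 0 ≤ t → deriv φ t = (9/256) * ε^2 * (a t)^4 := by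
  intro u a φ t ht
  have hE1 : 1 ≤ Real.exp (3*ε^2*t) := Real.one_le_exp (by positivity)
  have hupos : 0 < u t := by
    show 0 < 4*ε*Real.exp (3*ε^2*t) + a₀^2*(Real.exp (3*ε^2*t) - 1)
    nlinarith [sq_nonneg a₀]
  have hune : u t ≠ 0 := ne_of_gt hupos
  have h0 : HasDerivAt (fun s : ℝ => 3*ε^2*s) (3*ε^2) t := by
    simpa using (hasDerivAt_id t).const_mul (3*ε^2)
  have hexp : HasDerivAt (fun s : ℝ => Real.exp (3*ε^2*s))
      (Real.exp (3*ε^2*t) * (3*ε^2)) t := h0.exp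
  have hu : HasDerivAt u
      (4*ε*(Real.exp (3*ε^2*t) * (3*ε^2)) + a₀^2*(Real.exp (3*ε^2*t) * (3*ε^2))) t :=
    (hexp.const_mul (4*ε)).add ((hexp.sub_const 1).const_mul (a₀^2))
  have hlog : HasDerivAt (fun s => Real.log (u s))
      ((4*ε*(Real.exp (3*ε^2*t) * (3*ε^2)) + a₀^2*(Real.exp (3*ε^2*t) * (3*ε^2))) / u t) t :=
    hu.log hune
  have hinv : HasDerivAt (fun s => (3/16)*ε^2*a₀^2 / u s)
      ((3/16)*ε^2*a₀^2 *
        (-(4*ε*(Real.exp (3*ε^2*t) * (3*ε^2)) + a₀^2*(Real.exp (3*ε^2*t) * (3*ε^2))) / (u t)^2)) t :=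
    (hu.inv hune).const_mul ((3/16)*ε^2*a₀^2)
  have hlin : HasDerivAt (fun s : ℝ => (9/16)*ε^4*s) ((9/16)*ε^4) t := by
    simpa using (hasDerivAt_id t).const_mul ((9/16)*ε^4)
  have hφ : HasDerivAt φ
      (-(3/16)*ε^2 *
          ((4*ε*(Real.exp (3*ε^2*t) * (3*ε^2)) + a₀^2*(Real.exp (3*ε^2*t) * (3*ε^2))) / u t)
        + (9/16)*ε^4
        - (3/16)*ε^2*a₀^2 *
          (-(4*ε*(Real.exp (3*ε^2*t) * (3*ε^2)) + a₀^2*(Real.exp (3*ε^2*t) * (3*ε^2))) / (u t)^2)) t :=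
    ((hlog.const_mul (-(3/16)*ε^2)).add hlin).sub hinv
  rw [hφ.deriv]
  have ha4 : (a t)^4 = 16 * ε^2 * a₀^4 / (u t)^2 := by
    have h1 : (Real.sqrt ε)^4 = ε^2 := by
      rw [show (4:ℕ) = 2*2 from rfl, pow_mul, Real.sq_sqrt hε.le]
    have h2 : (Real.sqrt (u t))^4 = (u t)^2 := by
      rw [show (4:ℕ) = 2*2 from rfl, pow_mul, Real.sq_sqrt hupos.le]
    show (2 * Real.sqrt ε * a₀ / Real.sqrt (u t))^4 = _
    rw [div_pow, h2, mul_pow, mul_pow, h1]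
    ring
  rw [ha4]
  have hueq : u t = 4*ε*Real.exp (3*ε^2*t) + a₀^2*(Real.exp (3*ε^2*t) - 1) := rfl
  rw [hueq]
  have hne : 4*ε*Real.exp (3*ε^2*t) + a₀^2*(Real.exp (3*ε^2*t) - 1) ≠ 0 := hune
  have hne' : ε * 4 * Real.exp (3*ε^2*t) + a₀^2*(Real.exp (3*ε^2*t) - 1) ≠ 0 := by rwa [mul_comm ε 4]
  field_simp
  ring
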